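/- Let 𝒮 be an η-sparse family of dyadic cubes contained in a cube Q₀ (i.e., for each Q ∈ 𝒮 the sets E_Q = Q \ ∪{Q' ∈ 𝒮 : Q' ⊊ Q} satisfy |E_Q| ≥ η|Q| and are pairwise disjoint). Then for every weight w, every r > 1, and 0 < 1/r < 1, Σ_{Q∈𝒮} ((1/|Q|)∫_Q w^r)^{1/r} |Q| ≤ C_{r,n,η} ((1/|Q₀|)∫_{Q₀} w^r)^{1/r} |Q₀|. -/

import Mathlib

open MeasureTheory Metric Set
open scoped ENNReal Classical

lemma finUnion_bound {X : Type*} [MeasurableSpace X] (μ : Measure X) (f : X → ℝ≥0∞)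
    (Q : ℕ → Set X) (lam : ℝ≥0∞) :
    ∀ (F : Finset ℕ),
    (∀ j ∈ F, MeasurableSet (Q j)) →
    (∀ i ∈ F, ∀ j ∈ F, Q i ⊆ Q j ∨ Q j ⊆ Q i ∨ Disjoint (Q i) (Q j)) →
    (∀ j ∈ F, lam * μ (Q j) ≤ ∫⁻ y in Q j, f y ∂μ) →
    lam * μ (⋃ j ∈ F, Q j) ≤ ∫⁻ y in ⋃ j ∈ F, Q j, f y ∂μ := by
  intro F
  induction F using Finset.strongInductionOn with
  | _ F ih =>
    intro hmeas hnest hlow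
    rcases F.eq_empty_or_nonempty with rfl | hne
    · simp
    · classical
      obtain ⟨j₀, hj₀F, hmax⟩ : ∃ j₀ ∈ F, ∀ j ∈ F, ¬ Q j₀ ⊂ Q j := by
        obtain ⟨S, hSmem, hSmax⟩ := (F.image Q).exists_maximal (hne.image Q)
        obtain ⟨j₀, hj₀F, rfl⟩ := Finset.mem_image.1 hSmem
        exact ⟨j₀, hj₀F, fun j hj hlt => hlt.2 (hSmax (Finset.mem_image_of_mem Q hj) hlt.1)⟩
      set F₂ := F.filter (fun j => ¬ Q j ⊆ Q j₀) with hF₂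
      have hF₂ss : F₂ ⊂ F := by
        refine Finset.filter_ssubset.2 ⟨j₀, hj₀F, ?_⟩
        simp
      have hdisj : ∀ j ∈ F₂, Disjoint (Q j₀) (Q j) := by
        intro j hj
        rw [Finset.mem_filter] at hj
        rcases hnest j hj.1 j₀ hj₀F with h | h | h
        · exact absurd h hj.2
        · rcases eq_or_ne (Q j) (Q j₀) with he | hne'
          · exact absurd he.le hj.2
          · exact absurd ⟨h, fun hc => hne' ((le_antisymm hc h).symm ▸ rfl)⟩ (hmax j hj.1)
        · exact h.symm
      have hU : (⋃ j ∈ F, Q j) = Q j₀ ∪ ⋃ j ∈ F₂, Q j := by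
        apply Set.Subset.antisymm
        · intro x hx
          simp only [Set.mem_iUnion] at hx
          obtain ⟨j, hjF, hxj⟩ := hx
          by_cases hsub : Q j ⊆ Q j₀
          · exact Or.inl (hsub hxj)
          · exact Or.inr (Set.mem_biUnion (Finset.mem_filter.2 ⟨hjF, hsub⟩) hxj)
        · refine Set.union_subset ?_ ?_
          · exact Set.subset_biUnion_of_mem (u := Q) hj₀F
          · exact Set.iUnion₂_mono' fun j hj => ⟨j, Finset.mem_of_mem_filter j hj, le_rfl⟩
      have hmeasU2 : MeasurableSet (⋃ j ∈ F₂, Q j) :=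
        MeasurableSet.biUnion (F₂ : Set ℕ).to_countable
          (fun j hj => hmeas j (Finset.mem_of_mem_filter j hj))
      have hDU : Disjoint (Q j₀) (⋃ j ∈ F₂, Q j) :=
        Set.disjoint_iUnion₂_right.2 hdisj
      have ihF₂ := ih F₂ hF₂ss
        (fun j hj => hmeas j (Finset.mem_of_mem_filter j hj))
        (fun i hi j hj => hnest i (Finset.mem_of_mem_filter i hi) j (Finset.mem_of_mem_filter j hj))
        (fun j hj => hlow j (Finset.mem_of_mem_filter j hj))
      calc lam * μ (⋃ j ∈ F, Q j) = lam * μ (Q j₀) + lam * μ (⋃ j ∈ F₂, Q j) := by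
            rw [hU, measure_union hDU hmeasU2, mul_add]
        _ ≤ (∫⁻ y in Q j₀, f y ∂μ) + ∫⁻ y in ⋃ j ∈ F₂, Q j, f y ∂μ :=
            add_le_add (hlow j₀ hj₀F) ihF₂
        _ = ∫⁻ y in ⋃ j ∈ F, Q j, f y ∂μ := by
            rw [hU, lintegral_union hmeasU2 hDU]

lemma ctblUnion_bound {X : Type*} [MeasurableSpace X] (μ : Measure X) (f : X → ℝ≥0∞)
    (Q : ℕ → Set X) (lam : ℝ≥0∞)
    (S : Set ℕ)
    (hmeas : ∀ j ∈ S, MeasurableSet (Q j))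
    (hnest : ∀ i ∈ S, ∀ j ∈ S, Q i ⊆ Q j ∨ Q j ⊆ Q i ∨ Disjoint (Q i) (Q j))
    (hlow : ∀ j ∈ S, lam * μ (Q j) ≤ ∫⁻ y in Q j, f y ∂μ) :
    lam * μ (⋃ j ∈ S, Q j) ≤ ∫⁻ y in ⋃ j ∈ S, Q j, f y ∂μ := by
  classical
  set s : ℕ → Set X := fun m => ⋃ j ∈ (Finset.range m).filter (· ∈ S), Q j with hs
  have hmono : Monotone s := by
    intro a b hab
    apply Set.iUnion₂_mono'
    intro j hj
    rw [Finset.mem_filter, Finset.mem_range] at hj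
    exact ⟨j, Finset.mem_filter.2 ⟨Finset.mem_range.2 (hj.1.trans_le hab), hj.2⟩, le_rfl⟩
  have hUeq : (⋃ m, s m) = ⋃ j ∈ S, Q j := by
    ext x
    simp only [hs, Set.mem_iUnion, Finset.mem_filter, Finset.mem_range]
    constructor
    · rintro ⟨m, j, ⟨⟨_, hjS⟩, hx⟩⟩
      exact ⟨j, hjS, hx⟩
    · rintro ⟨j, hjS, hx⟩
      exact ⟨j + 1, j, ⟨⟨Nat.lt_succ_self j, hjS⟩, hx⟩⟩
  have key : ∀ m, lam * μ (s m) ≤ ∫⁻ y in ⋃ j ∈ S, Q j, f y ∂μ := by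
    intro m
    have h1 : lam * μ (s m) ≤ ∫⁻ y in s m, f y ∂μ := by
      apply finUnion_bound μ f Q lam
      · intro j hj
        rw [Finset.mem_filter] at hj
        exact hmeas j hj.2
      · intro i hi j hj
        rw [Finset.mem_filter] at hi hj
        exact hnest i hi.2 j hj.2
      · intro j hj
        rw [Finset.mem_filter] at hj
        exact hlow j hj.2
    refine h1.trans (lintegral_mono_set ?_)
    rw [← hUeq]; exact Set.subset_iUnion s m
  calc lam * μ (⋃ j ∈ S, Q j) = lam * ⨆ m, μ (s m) := by
        rw [← hUeq, (hmono.directed_le).measure_iUnion]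
    _ = ⨆ m, lam * μ (s m) := ENNReal.mul_iSup lam _
    _ ≤ _ := iSup_le key

lemma sparse_sum {X : Type*} [MeasurableSpace X] (μ : Measure X) (η : ℝ)
    (J : Set ℕ) (Q : ℕ → Set X)
    (hinj : J.InjOn Q)
    (hmeas : ∀ j ∈ J, MeasurableSet (Q j))
    (hnest : ∀ i ∈ J, ∀ j ∈ J, Q i ⊆ Q j ∨ Q j ⊆ Q i ∨ Disjoint (Q i) (Q j))
    (hsparse : ∀ j ∈ J, ENNReal.ofReal η * μ (Q j) ≤
      μ (Q j \ ⋃ i ∈ {i ∈ J | Q i ⊂ Q j}, Q i))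
    (hpd : ((fun j => Q j \ ⋃ i ∈ {i ∈ J | Q i ⊂ Q j}, Q i) '' J).PairwiseDisjoint id)
    (P : ℕ → Prop) [DecidablePred P] :
    ENNReal.ofReal η * ∑' (j : J), (if P j.1 then μ (Q j.1) else 0) ≤
      μ (⋃ j ∈ {j ∈ J | P j}, Q j) := by
  classical
  set E : ℕ → Set X := fun j => Q j \ ⋃ i ∈ {i ∈ J | Q i ⊂ Q j}, Q i with hE
  have hEsub : ∀ j, E j ⊆ Q j := fun j => Set.diff_subset
  have hEmeas : ∀ j ∈ J, MeasurableSet (E j) := by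
    intro j hj
    exact (hmeas j hj).diff (MeasurableSet.biUnion ({i ∈ J | Q i ⊂ Q j}).to_countable
      (fun i hi => hmeas i hi.1))
  have hEdisj : J.PairwiseDisjoint E := by
    intro i hi j hj hij
    rcases eq_or_ne (E i) (E j) with he | hne
    · -- then E i = ∅
      have hQne : Q i ≠ Q j := fun h => hij (hinj hi hj h)
      have hempty : E i = ∅ := by
        rcases hnest i hi j hj with h | h | h
        · have hss : Q i ⊂ Q j := ⟨h, fun hc => hQne (le_antisymm h hc)⟩
          have hsubU : Q i ⊆ ⋃ i' ∈ {i' ∈ J | Q i' ⊂ Q j}, Q i' :=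
            Set.subset_biUnion_of_mem (u := Q) (show i ∈ {i' ∈ J | Q i' ⊂ Q j} from ⟨hi, hss⟩)
          apply Set.eq_empty_of_subset_empty
          intro x hx
          have hx2 : x ∈ E j := he ▸ hx
          exact hx2.2 (hsubU (hEsub i hx))
        · have hss : Q j ⊂ Q i := ⟨h, fun hc => hQne (le_antisymm hc h)⟩
          have hsubU : Q j ⊆ ⋃ i' ∈ {i' ∈ J | Q i' ⊂ Q i}, Q i' :=
            Set.subset_biUnion_of_mem (u := Q) (show j ∈ {i' ∈ J | Q i' ⊂ Q i} from ⟨hj, hss⟩)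
          apply Set.eq_empty_of_subset_empty
          intro x hx
          exact hx.2 (hsubU (hEsub j (he ▸ hx)))
        · apply Set.eq_empty_of_subset_empty
          intro x hx
          exact (h.le_bot ⟨hEsub i hx, hEsub j (he ▸ hx)⟩)
      rw [Function.onFun, hempty]
      exact disjoint_bot_left
    · exact hpd (Set.mem_image_of_mem _ hi) (Set.mem_image_of_mem _ hj) hne
  set E' : ℕ → Set X := fun j => if P j then E j else ∅ with hE'
  have step1 : ENNReal.ofReal η * ∑' (j : J), (if P j.1 then μ (Q j.1) else 0) ≤
      ∑' (j : J), μ (E' j.1) := by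
    rw [← ENNReal.tsum_mul_left]
    apply ENNReal.tsum_le_tsum
    intro j
    by_cases hP : P j.1
    · simp only [hE', if_pos hP]
      exact hsparse j.1 j.2
    · simp [hE', if_neg hP]
  have step2 : ∑' (j : J), μ (E' j.1) = μ (⋃ j ∈ J, E' j) := by
    rw [measure_biUnion J.to_countable ?_ (fun j hj => ?_)]
    · intro i hi j hj hij
      by_cases hPi : P i <;> by_cases hPj : P j <;>
        simp only [hE', Function.onFun, if_pos, if_neg, hPi, hPj, if_true, if_false]
      · exact hEdisj hi hj hij
      all_goals simp
    · by_cases hP : P j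
      · simpa [hE', if_pos hP] using hEmeas j hj
      · simp [hE', if_neg hP]
  have step3 : μ (⋃ j ∈ J, E' j) ≤ μ (⋃ j ∈ {j ∈ J | P j}, Q j) := by
    apply measure_mono
    intro x hx
    simp only [Set.mem_iUnion] at hx ⊢
    obtain ⟨j, hjJ, hxj⟩ := hx
    by_cases hP : P j
    · rw [hE'] at hxj
      simp only [if_pos hP] at hxj
      exact ⟨j, ⟨hjJ, hP⟩, hEsub j hxj⟩
    · rw [hE'] at hxj; simp [if_neg hP] at hxj
  exact step1.trans (step2.le.trans step3)

lemma pointwise_layer (δ : ℝ) (hδ0 : 0 < δ) (A x : ℝ≥0∞) (hA0 : A ≠ 0) (hAt : A ≠ ∞)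
    (hx : x ≠ ∞) :
    x ^ δ ≤ A ^ δ + (2:ℝ≥0∞) ^ δ * A ^ δ *
      ∑' (k : ℕ), (if (2:ℝ≥0∞) ^ k * A ≤ x then ((2:ℝ≥0∞) ^ δ) ^ k else 0) := by
  by_cases hle : x ≤ A
  · exact le_add_right (ENNReal.rpow_le_rpow hle hδ0.le)
  · push_neg at hle
    have hxA : x / A ≠ ∞ := (ENNReal.div_lt_top hx hA0).ne
    obtain ⟨m, hm⟩ := ENNReal.exists_nat_gt hxA
    have hm2 : x < (2:ℝ≥0∞) ^ m * A := by
      have h1 : x < (m : ℝ≥0∞) * A := by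
        rw [← ENNReal.div_lt_iff (Or.inl hA0) (Or.inl hAt)]
        exact hm
      refine h1.trans_le (mul_le_mul_left ?_ A)
      have := (Nat.lt_two_pow_self (n := m)).le
      exact_mod_cast this
    set p : ℕ → Prop := fun k => (2:ℝ≥0∞) ^ k * A ≤ x with hp
    have hp0 : p 0 := by simpa [hp] using hle.le
    have hK : p (Nat.findGreatest p m) := Nat.findGreatest_spec (Nat.zero_le m) hp0
    set K := Nat.findGreatest p m with hKdef
    have hKle : K ≤ m := Nat.findGreatest_le m
    have hpm : ¬ p m := not_le.2 hm2
    have hKm : K < m := lt_of_le_of_ne hKle (fun h => absurd (h ▸ hK) hpm)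
    have hnotK1 : ¬ p (K + 1) := Nat.findGreatest_is_greatest (Nat.lt_succ_self K) hKm
    have hxlt : x < (2:ℝ≥0∞) ^ (K + 1) * A := not_le.1 hnotK1
    have h2ne : (2:ℝ≥0∞) ≠ 0 := by norm_num
    have h2net : (2:ℝ≥0∞) ≠ ∞ := by norm_num
    have hpowδ : ((2:ℝ≥0∞) ^ (K + 1) : ℝ≥0∞) ^ δ = (2:ℝ≥0∞) ^ δ * ((2:ℝ≥0∞) ^ δ) ^ K := by
      rw [← ENNReal.rpow_natCast 2 (K + 1), ← ENNReal.rpow_mul, ← ENNReal.rpow_natCast ((2:ℝ≥0∞) ^ δ) K,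
        ← ENNReal.rpow_mul, ← ENNReal.rpow_add _ _ h2ne h2net]
      congr 1
      push_cast
      ring
    calc x ^ δ ≤ ((2:ℝ≥0∞) ^ (K + 1) * A) ^ δ := ENNReal.rpow_le_rpow hxlt.le hδ0.le
      _ = (2:ℝ≥0∞) ^ δ * A ^ δ * ((2:ℝ≥0∞) ^ δ) ^ K := by
          rw [ENNReal.mul_rpow_of_nonneg _ _ hδ0.le, hpowδ]; ring
      _ ≤ (2:ℝ≥0∞) ^ δ * A ^ δ *
            ∑' (k : ℕ), (if p k then ((2:ℝ≥0∞) ^ δ) ^ k else 0) := by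
          refine mul_le_mul_right ?_ _
          have h := ENNReal.le_tsum (f := fun k => if p k then ((2:ℝ≥0∞) ^ δ) ^ k else 0) K
          rwa [if_pos hK] at h
      _ ≤ _ := le_add_self

/-- For an `η`-sparse family of (dyadic-like, i.e. nested-or-disjoint) cubes
`{Q_j}_{j∈J}` contained in a cube `Q₀` — meaning the sets
`E_j = Q_j \ ∪{Q_i : Q_i ⊊ Q_j}` satisfy `|E_j| ≥ η|Q_j|` and are pairwise
disjoint — one has, for every weight `w` and `r > 1`,
`Σ_j ((1/|Q_j|)∫_{Q_j} w^r)^{1/r} |Q_j| ≤ C_{r,n,η} ((1/|Q₀|)∫_{Q₀} w^r)^{1/r} |Q₀|`. -/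
theorem stmt10 (n : ℕ) (r η : ℝ) (hr : 1 < r) (hη0 : 0 < η) (hη1 : η < 1) :
    ∃ C : ℝ≥0∞, 0 < C ∧ C < ∞ ∧
      ∀ (c₀ : Fin n → ℝ) (ρ₀ : ℝ), 0 < ρ₀ →
      ∀ (J : Set ℕ) (Q : ℕ → Set (Fin n → ℝ)),
        J.InjOn Q →
        (∀ j ∈ J, ∃ (c : Fin n → ℝ) (ρ : ℝ), 0 < ρ ∧ Q j = closedBall c ρ) →
        (∀ j ∈ J, Q j ⊆ closedBall c₀ ρ₀) →
        (∀ i ∈ J, ∀ j ∈ J, Q i ⊆ Q j ∨ Q j ⊆ Q i ∨ Disjoint (Q i) (Q j)) →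
        (∀ j ∈ J, ENNReal.ofReal η * volume (Q j) ≤
          volume (Q j \ ⋃ i ∈ {i ∈ J | Q i ⊂ Q j}, Q i)) →
        ((fun j => Q j \ ⋃ i ∈ {i ∈ J | Q i ⊂ Q j}, Q i) '' J).PairwiseDisjoint id →
        ∀ w : (Fin n → ℝ) → ℝ≥0∞, Measurable w →
          ∑' j : J, ((volume (Q j))⁻¹ * ∫⁻ y in Q j, (w y) ^ r) ^ (1/r) * volume (Q j) ≤
            C * ((volume (closedBall c₀ ρ₀))⁻¹ *
                ∫⁻ y in closedBall c₀ ρ₀, (w y) ^ r) ^ (1/r) *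
              volume (closedBall c₀ ρ₀) := by
  have hr0 : (0:ℝ) < r := lt_trans one_pos hr
  set δ : ℝ := 1/r with hδ
  have hδ0 : 0 < δ := by positivity
  have hδ1 : δ < 1 := by rw [hδ, div_lt_one hr0]; exact hr
  set q : ℝ≥0∞ := (2:ℝ≥0∞) ^ δ with hq
  have hq2 : q < 2 := by
    calc q < (2:ℝ≥0∞) ^ (1:ℝ) :=
          ENNReal.rpow_lt_rpow_of_exponent_lt (by norm_num : (1:ℝ≥0∞) < 2) (by norm_num) hδ1
      _ = 2 := ENNReal.rpow_one 2
  have hqt : q ≠ ∞ := (hq2.trans_le le_top).ne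
  have hq1 : (1:ℝ≥0∞) ≤ q := by
    have := ENNReal.rpow_le_rpow_of_exponent_le (x := 2) one_le_two hδ0.le
    rwa [ENNReal.rpow_zero] at this
  have hq0 : q ≠ 0 := (one_pos.trans_le hq1).ne'
  have hhalf : q * 2⁻¹ < 1 := by
    rw [← div_eq_mul_inv]
    refine (ENNReal.div_lt_iff (Or.inl two_ne_zero) (Or.inl ENNReal.ofNat_ne_top)).2 ?_
    simpa using hq2
  set s : ℝ≥0∞ := ∑' k : ℕ, (q * 2⁻¹) ^ k with hs
  have hst : s ≠ ∞ := by
    rw [hs, ENNReal.tsum_geometric, Ne, ENNReal.inv_eq_top, tsub_eq_zero_iff_le]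
    exact not_le.2 hhalf
  have hη' : ENNReal.ofReal η ≠ 0 := (ENNReal.ofReal_pos.2 hη0).ne'
  set c1 : ℝ≥0∞ := (ENNReal.ofReal η)⁻¹ with hc1
  have hc10 : c1 ≠ 0 := ENNReal.inv_ne_zero.2 ENNReal.ofReal_ne_top
  have hc1t : c1 ≠ ∞ := ENNReal.inv_ne_top.2 hη'
  have hfac0 : (1 + q * s) ≠ 0 := (zero_lt_one.trans_le le_self_add).ne'
  have hfact : (1 + q * s) ≠ ∞ := by
    refine ENNReal.add_ne_top.2 ⟨ENNReal.one_ne_top, ENNReal.mul_ne_top hqt hst⟩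
  refine ⟨c1 * (1 + q * s), ?_, ?_, ?_⟩
  · exact ENNReal.mul_pos hc10 hfac0
  · exact ENNReal.mul_lt_top (lt_top_iff_ne_top.2 hc1t) (lt_top_iff_ne_top.2 hfact)
  intro c₀ ρ₀ hρ₀ J Q hinj hcube hsub hnest hsparse hpd w hw
  classical
  set f : (Fin n → ℝ) → ℝ≥0∞ := fun y => w y ^ r with hfdef
  have hf : Measurable f := hw.pow_const r
  set Q₀ := closedBall c₀ ρ₀ with hQ₀
  set V : ℝ≥0∞ := volume Q₀ with hV
  have hV0 : V ≠ 0 := (measure_closedBall_pos volume c₀ hρ₀).ne'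
  have hVt : V ≠ ∞ := measure_closedBall_lt_top.ne
  set T : ℝ≥0∞ := ∫⁻ y in Q₀, f y with hT
  have hQmeas : ∀ j ∈ J, MeasurableSet (Q j) := by
    intro j hj; obtain ⟨c, ρ, _, heq⟩ := hcube j hj
    rw [heq]; exact measurableSet_closedBall
  have hQ0' : ∀ j ∈ J, volume (Q j) ≠ 0 := by
    intro j hj; obtain ⟨c, ρ, hρ, heq⟩ := hcube j hj
    rw [heq]; exact (measure_closedBall_pos volume c hρ).ne'
  have hQt' : ∀ j ∈ J, volume (Q j) ≠ ∞ := by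
    intro j hj; obtain ⟨c, ρ, hρ, heq⟩ := hcube j hj
    rw [heq]; exact measure_closedBall_lt_top.ne
  have hIle : ∀ j ∈ J, (∫⁻ y in Q j, f y) ≤ T := fun j hj => lintegral_mono_set (hsub j hj)
  by_cases hT0 : T = 0
  · have hz : ∀ j : J, ((volume (Q ↑j))⁻¹ * ∫⁻ y in Q ↑j, f y) ^ δ * volume (Q ↑j) = 0 := by
      intro j
      have h0 : (∫⁻ y in Q ↑j, f y) = 0 := le_antisymm (hT0 ▸ hIle ↑j j.2) zero_le
      rw [h0, mul_zero, ENNReal.zero_rpow_of_pos hδ0, zero_mul]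
    calc ∑' (j : J), ((volume (Q ↑j))⁻¹ * ∫⁻ y in Q ↑j, f y) ^ δ * volume (Q ↑j)
        = 0 := by rw [tsum_congr hz, tsum_zero]
      _ ≤ _ := zero_le
  by_cases hTt : T = ∞
  · have hRHS : c1 * (1 + q * s) * ((V⁻¹ * T) ^ δ) * V = ∞ := by
      rw [hTt, ENNReal.mul_top (ENNReal.inv_ne_zero.2 hVt), ENNReal.top_rpow_of_pos hδ0,
        ENNReal.mul_top (ENNReal.mul_pos hc10 hfac0).ne', ENNReal.top_mul hV0]
    rw [hRHS]; exact le_top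
  -- main case
  set A : ℝ≥0∞ := V⁻¹ * T with hA
  have hA0 : A ≠ 0 := mul_ne_zero (ENNReal.inv_ne_zero.2 hVt) hT0
  have hAt : A ≠ ∞ := ENNReal.mul_ne_top (ENNReal.inv_ne_top.2 hV0) hTt
  have hAinvT : A⁻¹ * T = V := by
    rw [hA, ENNReal.mul_inv (Or.inl (ENNReal.inv_ne_zero.2 hVt))
      (Or.inl (ENNReal.inv_ne_top.2 hV0)), inv_inv, mul_assoc,
      ENNReal.inv_mul_cancel hT0 hTt, mul_one]
  have hdivη : ∀ x y : ℝ≥0∞, ENNReal.ofReal η * x ≤ y → x ≤ c1 * y := by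
    intro x y h
    rw [hc1, ← ENNReal.div_eq_inv_mul]
    exact (ENNReal.le_div_iff_mul_le (Or.inl hη') (Or.inl ENNReal.ofReal_ne_top)).2
      (by rwa [mul_comm])
  have hsumQ : ∑' (j : J), volume (Q ↑j) ≤ c1 * V := by
    apply hdivη
    have h := sparse_sum volume η J Q hinj hQmeas hnest hsparse hpd (fun _ => True)
    simp only [if_true] at h
    refine h.trans (measure_mono (Set.iUnion₂_subset fun j hj => hsub j hj.1))
  have hinner : ∀ k : ℕ, (∑' (j : J),
      (if (2:ℝ≥0∞) ^ k * A * volume (Q ↑j) ≤ ∫⁻ y in Q ↑j, f y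
        then volume (Q ↑j) else 0))
      ≤ c1 * ((2⁻¹ : ℝ≥0∞) ^ k * V) := by
    intro k
    apply hdivη
    have h := sparse_sum volume η J Q hinj hQmeas hnest hsparse hpd
      (fun j => (2:ℝ≥0∞) ^ k * A * volume (Q j) ≤ ∫⁻ y in Q j, f y)
    refine h.trans ?_
    set lam := (2:ℝ≥0∞) ^ k * A with hlam
    have hlam0 : lam ≠ 0 := mul_ne_zero (pow_ne_zero k two_ne_zero) hA0
    have h2 := ctblUnion_bound volume f Q lam
      {j ∈ J | lam * volume (Q j) ≤ ∫⁻ y in Q j, f y}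
      (fun j hj => hQmeas j hj.1)
      (fun i hi j hj => hnest i hi.1 j hj.1)
      (fun j hj => hj.2)
    have h3 : lam * volume (⋃ j ∈ {j ∈ J |
        lam * volume (Q j) ≤ ∫⁻ y in Q j, f y}, Q j) ≤ T :=
      h2.trans (lintegral_mono_set (Set.iUnion₂_subset fun j hj => hsub j hj.1))
    have h4 : volume (⋃ j ∈ {j ∈ J |
        lam * volume (Q j) ≤ ∫⁻ y in Q j, f y}, Q j) ≤ lam⁻¹ * T := by
      rw [← ENNReal.div_eq_inv_mul]
      exact (ENNReal.le_div_iff_mul_le (Or.inl hlam0) (Or.inr hTt)).2 (by rwa [mul_comm])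
    have h5 : lam⁻¹ * T = (2⁻¹ : ℝ≥0∞) ^ k * V := by
      rw [hlam, ENNReal.mul_inv (Or.inl (pow_ne_zero k two_ne_zero)) (Or.inr hA0),
        ENNReal.inv_pow, mul_assoc, hAinvT]
    exact le_trans (measure_mono (by exact Set.Subset.rfl)) (h5 ▸ h4)
  have hmain : ∀ j : J,
      ((volume (Q ↑j))⁻¹ * ∫⁻ y in Q ↑j, f y) ^ δ * volume (Q ↑j) ≤
        A ^ δ * volume (Q ↑j) + q * A ^ δ *
          ∑' (k : ℕ), (if (2:ℝ≥0∞) ^ k * A * volume (Q ↑j) ≤ ∫⁻ y in Q ↑j, f y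
            then q ^ k * volume (Q ↑j) else 0) := by
    intro j
    have hv0 : volume (Q ↑j) ≠ 0 := hQ0' ↑j j.2
    have hvt : volume (Q ↑j) ≠ ∞ := hQt' ↑j j.2
    have hxne : (volume (Q ↑j))⁻¹ * (∫⁻ y in Q ↑j, f y) ≠ ∞ :=
      ENNReal.mul_ne_top (ENNReal.inv_ne_top.2 hv0)
        ((hIle ↑j j.2).trans_lt (lt_top_iff_ne_top.2 hTt)).ne
    have hpt := pointwise_layer δ hδ0 A ((volume (Q ↑j))⁻¹ * ∫⁻ y in Q ↑j, f y) hA0 hAt hxne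
    rw [← hq] at hpt
    have hcond : ∀ k : ℕ, ((2:ℝ≥0∞) ^ k * A ≤ (volume (Q ↑j))⁻¹ * ∫⁻ y in Q ↑j, f y) ↔
        ((2:ℝ≥0∞) ^ k * A * volume (Q ↑j) ≤ ∫⁻ y in Q ↑j, f y) := by
      intro k
      rw [← ENNReal.div_eq_inv_mul]
      exact ENNReal.le_div_iff_mul_le (Or.inl hv0) (Or.inl hvt)
    calc ((volume (Q ↑j))⁻¹ * ∫⁻ y in Q ↑j, f y) ^ δ * volume (Q ↑j)
        ≤ (A ^ δ + q * A ^ δ *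
            ∑' (k : ℕ), (if (2:ℝ≥0∞) ^ k * A ≤ (volume (Q ↑j))⁻¹ * ∫⁻ y in Q ↑j, f y
              then q ^ k else 0)) * volume (Q ↑j) := mul_le_mul_left hpt _
      _ = A ^ δ * volume (Q ↑j) + q * A ^ δ *
            ∑' (k : ℕ), (if (2:ℝ≥0∞) ^ k * A * volume (Q ↑j) ≤ ∫⁻ y in Q ↑j, f y
              then q ^ k * volume (Q ↑j) else 0) := by
          have hterm : ∀ k : ℕ,
              (if (2:ℝ≥0∞) ^ k * A ≤ (volume (Q ↑j))⁻¹ * ∫⁻ y in Q ↑j, f y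
                then q ^ k else 0) * volume (Q ↑j) =
              (if (2:ℝ≥0∞) ^ k * A * volume (Q ↑j) ≤ ∫⁻ y in Q ↑j, f y
                then q ^ k * volume (Q ↑j) else 0) := fun k => by
            rw [ite_mul, zero_mul]
            exact if_congr (hcond k) rfl rfl
          rw [add_mul, mul_assoc (q * A ^ δ), ← ENNReal.tsum_mul_right, tsum_congr hterm]
  have hdouble : (∑' (j : J), ∑' (k : ℕ),
      (if (2:ℝ≥0∞) ^ k * A * volume (Q ↑j) ≤ ∫⁻ y in Q ↑j, f y
        then q ^ k * volume (Q ↑j) else 0)) ≤ c1 * V * s := by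
    rw [ENNReal.tsum_comm]
    have hk : ∀ k : ℕ, (∑' (j : J),
        (if (2:ℝ≥0∞) ^ k * A * volume (Q ↑j) ≤ ∫⁻ y in Q ↑j, f y
          then q ^ k * volume (Q ↑j) else 0)) ≤ (q * 2⁻¹) ^ k * (c1 * V) := by
      intro k
      have h1 : (∑' (j : J),
          (if (2:ℝ≥0∞) ^ k * A * volume (Q ↑j) ≤ ∫⁻ y in Q ↑j, f y
            then q ^ k * volume (Q ↑j) else 0)) = q ^ k * ∑' (j : J),
          (if (2:ℝ≥0∞) ^ k * A * volume (Q ↑j) ≤ ∫⁻ y in Q ↑j, f y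
            then volume (Q ↑j) else 0) := by
        rw [← ENNReal.tsum_mul_left]
        exact tsum_congr fun j => by rw [mul_ite, mul_zero]
      rw [h1]
      refine (mul_le_mul_right (hinner k) _).trans_eq ?_
      rw [mul_pow]; ring
    refine (ENNReal.tsum_le_tsum hk).trans_eq ?_
    rw [ENNReal.tsum_mul_right, ← hs]; ring
  calc ∑' (j : J), ((volume (Q ↑j))⁻¹ * ∫⁻ y in Q ↑j, f y) ^ δ * volume (Q ↑j)
      ≤ ∑' (j : J), (A ^ δ * volume (Q ↑j) + q * A ^ δ *
          ∑' (k : ℕ), (if (2:ℝ≥0∞) ^ k * A * volume (Q ↑j) ≤ ∫⁻ y in Q ↑j, f y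
            then q ^ k * volume (Q ↑j) else 0)) := ENNReal.tsum_le_tsum hmain
    _ = A ^ δ * (∑' (j : J), volume (Q ↑j)) + q * A ^ δ *
          ∑' (j : J), ∑' (k : ℕ),
            (if (2:ℝ≥0∞) ^ k * A * volume (Q ↑j) ≤ ∫⁻ y in Q ↑j, f y
              then q ^ k * volume (Q ↑j) else 0) := by
        rw [ENNReal.tsum_add, ENNReal.tsum_mul_left, ENNReal.tsum_mul_left]
    _ ≤ A ^ δ * (c1 * V) + q * A ^ δ * (c1 * V * s) :=
        add_le_add (mul_le_mul_right hsumQ _) (mul_le_mul_right hdouble _)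
    _ = c1 * (1 + q * s) * A ^ δ * V := by ring
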